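/- arXiv:2508.03372 — 5 statements merged into one kernel-verified Lean document; each statement's English description precedes it below -/
import Mathlib

section
/- Let N be a finite group and let G₁, G₂ be subgroups of Equiv.Perm N contained in Hol(N), with G₁ transitive on N. If G₁ and G₂ are conjugate by an element of Hol(N), then there exists β ∈ MulAut N such that conjugation by the permutation induced by β carries G₁ onto G₂ and carries the stabilizer {g ∈ G₁ | g(1) = 1} of the identity element 1 ∈ N in G₁ onto the stabilizer {g ∈ G₂ | g(1) = 1} of 1 in G₂; in particular G₂ is also transitive on N. -/
/-- The left regular representation of a group `N` in `Equiv.Perm N`. -/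
def leftReg (N : Type*) [Group N] : N →* Equiv.Perm N :=
  MulAction.toPermHom N N

/-- The holomorph of `N`: the normalizer of the image of the left regular
representation inside `Equiv.Perm N`. -/
def Hol (N : Type*) [Group N] : Subgroup (Equiv.Perm N) :=
  Subgroup.normalizer ((leftReg N).range : Set (Equiv.Perm N))

/-- A subgroup of `Equiv.Perm N` is transitive on `N`. -/
def IsTransitiveSubgroup {N : Type*} [Group N] (M : Subgroup (Equiv.Perm N)) : Prop :=
  ∀ a b : N, ∃ g ∈ M, g a = b

lemma leftReg_apply {N : Type*} [Group N] (x y : N) : leftReg N x y = x * y := rfl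

/-- An element of the holomorph conjugates `λ x` to `λ (h x)`. -/
lemma hol_conj {N : Type*} [Group N] {h : Equiv.Perm N} (hh : h ∈ Hol N)
    (h1 : h 1 = 1) (x : N) :
    h * leftReg N x * h⁻¹ = leftReg N (h x) := by
  have := MonoidHom.mem_range.mp ((Subgroup.mem_normalizer_iff.mp hh (leftReg N x)).mp (MonoidHom.mem_range.mpr ⟨x, rfl⟩))
  obtain ⟨x', hx'⟩ := this
  have hi1 : h⁻¹ 1 = 1 := by conv_lhs => rw [← h1]; simp
  have hval : (h * leftReg N x * h⁻¹) 1 = x' := by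
    rw [← hx']; simp [leftReg_apply]
  have : x' = h x := by
    rw [← hval]
    simp [Equiv.Perm.mul_apply, leftReg_apply, hi1]
  rw [← hx', this]

/-- An element of the holomorph fixing `1` is induced by an automorphism. -/
lemma hol_fix_one {N : Type*} [Group N] {h : Equiv.Perm N} (hh : h ∈ Hol N)
    (h1 : h 1 = 1) : ∃ β : MulAut N, MulAut.toPerm N β = h := by
  have hmul : ∀ x y : N, h (x * y) = h x * h y := by
    intro x y
    have := congrArg (fun p : Equiv.Perm N => p (h y)) (hol_conj hh h1 x)
    simpa [Equiv.Perm.mul_apply, leftReg_apply] using this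
  exact ⟨{ toEquiv := h, map_mul' := hmul }, rfl⟩

theorem conj_in_hol_gives_perm_group_isom (N : Type*) [Group N] [Finite N]
    (G₁ G₂ : Subgroup (Equiv.Perm N)) (hG₁ : G₁ ≤ Hol N) (hG₂ : G₂ ≤ Hol N)
    (htrans : IsTransitiveSubgroup G₁)
    (hconj : ∃ h ∈ Hol N, Subgroup.map (MulAut.conj h).toMonoidHom G₁ = G₂) :
    ∃ β : MulAut N,
      Subgroup.map (MulAut.conj (MulAut.toPerm N β)).toMonoidHom G₁ = G₂ ∧
      (fun g : Equiv.Perm N => MulAut.toPerm N β * g * (MulAut.toPerm N β)⁻¹) ''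
          {g : Equiv.Perm N | g ∈ G₁ ∧ g 1 = 1} =
        {g : Equiv.Perm N | g ∈ G₂ ∧ g 1 = 1} ∧
      IsTransitiveSubgroup G₂ := by
  obtain ⟨h, hHol, hmap⟩ := hconj
  obtain ⟨g, hgG, hg1⟩ := htrans 1 (h⁻¹ 1)
  set k := h * g with hk
  have hkHol : k ∈ Hol N := mul_mem hHol (hG₁ hgG)
  have hk1 : k 1 = 1 := by
    simp [hk, Equiv.Perm.mul_apply, hg1]
  obtain ⟨β, hβ⟩ := hol_fix_one hkHol hk1
  have hkmap : Subgroup.map (MulAut.conj k).toMonoidHom G₁ = G₂ := by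
    rw [← hmap]
    ext x
    simp only [Subgroup.mem_map, MulEquiv.coe_toMonoidHom, MulAut.conj_apply]
    constructor
    · rintro ⟨y, hy, rfl⟩
      exact ⟨g * y * g⁻¹, mul_mem (mul_mem hgG hy) (inv_mem hgG), by rw [hk]; group⟩
    · rintro ⟨y, hy, rfl⟩
      exact ⟨g⁻¹ * y * g, mul_mem (mul_mem (inv_mem hgG) hy) hgG, by rw [hk]; group⟩
  have hki1 : k⁻¹ 1 = 1 := by
    conv_lhs => rw [← hk1]
    simp
  have hmem : ∀ x : Equiv.Perm N, x ∈ G₂ ↔ k⁻¹ * x * k ∈ G₁ := by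
    intro x
    rw [← hkmap]
    simp only [Subgroup.mem_map, MulEquiv.coe_toMonoidHom, MulAut.conj_apply]
    constructor
    · rintro ⟨y, hy, rfl⟩
      have : k⁻¹ * (k * y * k⁻¹) * k = y := by group
      rwa [this]
    · intro hx
      exact ⟨k⁻¹ * x * k, hx, by group⟩
  refine ⟨β, by rwa [hβ], ?_, ?_⟩
  · rw [hβ]
    ext x
    simp only [Set.mem_image, Set.mem_setOf_eq]
    constructor
    · rintro ⟨y, ⟨hyG, hy1⟩, rfl⟩
      refine ⟨?_, ?_⟩
      · rw [hmem]
        have : k⁻¹ * (k * y * k⁻¹) * k = y := by group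
        rwa [this]
      · simp [Equiv.Perm.mul_apply, hki1, hy1, hk1]
    · rintro ⟨hxG, hx1⟩
      refine ⟨k⁻¹ * x * k, ⟨(hmem x).mp hxG, ?_⟩, by group⟩
      simp [Equiv.Perm.mul_apply, hk1, hx1, hki1]
  · intro a b
    obtain ⟨y, hyG, hy⟩ := htrans (k⁻¹ a) (k⁻¹ b)
    refine ⟨k * y * k⁻¹, ?_, ?_⟩
    · rw [hmem]
      have : k⁻¹ * (k * y * k⁻¹) * k = y := by group
      rwa [this]
    · rw [Equiv.Perm.mul_apply, Equiv.Perm.mul_apply, hy]; simp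
end

section
/- Let N be a finite group, let G be a group, and let δ : G →* N ⋊ Aut(N) be a group homomorphism whose image acts transitively on N under the action (η,α)·μ = η·α(μ). Define g ⊙ μ := δ(g)·μ for g ∈ G, μ ∈ N. Then ⊙ is a transitive action of G on N and it satisfies the skew bracoid relation: for all g ∈ G and all μ, ν ∈ N, g ⊙ (μ·ν) = (g ⊙ μ) · (g ⊙ 1)⁻¹ · (g ⊙ ν), where 1 is the identity of N. -/
/-- For a group `N`, the holomorph realized as the semidirect product
`N ⋊ Aut(N)` with respect to the identity map `MulAut N →* MulAut N`. -/
abbrev HolSDP (N : Type*) [Group N] :=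
  SemidirectProduct N (MulAut N) (MonoidHom.id (MulAut N))

/-- The action of `N ⋊ Aut(N)` on `N` given by `(η, α) · μ = η * α μ`. -/
def holAct {N : Type*} [Group N] (x : HolSDP N) (μ : N) : N :=
  x.left * x.right μ

theorem skew_bracoid_from_transitive_hom (N : Type*) [Group N] [Finite N]
    (G : Type*) [Group G] (δ : G →* HolSDP N)
    (htrans : ∀ μ ν : N, ∃ g : G, holAct (δ g) μ = ν) :
    -- `g ⊙ μ := δ(g) · μ` is an action of `G` on `N`:
    (∀ μ : N, holAct (δ 1) μ = μ) ∧
    (∀ g k : G, ∀ μ : N, holAct (δ (g * k)) μ = holAct (δ g) (holAct (δ k) μ)) ∧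
    -- the action is transitive:
    (∀ μ ν : N, ∃ g : G, holAct (δ g) μ = ν) ∧
    -- and it satisfies the skew bracoid relation:
    (∀ g : G, ∀ μ ν : N,
      holAct (δ g) (μ * ν) =
        holAct (δ g) μ * (holAct (δ g) 1)⁻¹ * holAct (δ g) ν) := by
  refine ⟨fun μ => ?_, fun g k μ => ?_, htrans, fun g μ ν => ?_⟩
  · simp [holAct]
  · simp [holAct, map_mul, mul_assoc]
  · simp [holAct, map_mul, mul_assoc]
end

section
/- Let p > q be odd primes with p ≡ 1 (mod q). Let φ : Multiplicative (ZMod q) →* MulAut (Multiplicative (ZMod p)) and ψ : Multiplicative (ZMod (2*q)) →* MulAut (Multiplicative (ZMod p)) be injective homomorphisms, and set N₅ = C₂ × (C_p ⋊[φ] C_q) and N₆ = C_p ⋊[ψ] C_{2q}. Then no subgroup of Equiv.Perm (DihedralGroup (p*q)) that is contained in Hol(D_{pq}) and transitive on D_{pq} is isomorphic, as an abstract group, to Hol(N₅) (i.e. to N₅ ⋊ Aut(N₅)), and none is isomorphic to Hol(N₆) (i.e. to N₆ ⋊ Aut(N₆)). -/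
/-- A group `G` embeds transitively in `Hol(N)` if there is an injective
homomorphism `G →* Equiv.Perm N` whose range lies in `Hol(N)` and is
transitive on `N`. -/
def EmbedsTransitively (G : Type*) [Group G] (N : Type*) [Group N] : Prop :=
  ∃ φ : G →* Equiv.Perm N, Function.Injective φ ∧ φ.range ≤ Hol N ∧
    IsTransitiveSubgroup φ.range

namespace HolAux

open DihedralGroup Equiv

/-- Decomposition of an element of the holomorph. -/
lemma hol_decomp {N : Type*} [Group N] {π : Equiv.Perm N} (hπ : π ∈ Hol N) :
    ∃ f : N →* N, Function.Injective f ∧ ∀ g, π g = f g * π 1 := by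
  rw [Hol, Subgroup.mem_normalizer_iff] at hπ
  have key : ∀ g : N, ∃ h : N, ∀ x : N, π (g * x) = h * π x := by
    intro g
    obtain ⟨h, hh⟩ := (hπ (leftReg N g)).mp ⟨g, rfl⟩
    refine ⟨h, fun x => ?_⟩
    have h2 := congrArg (fun σ : Equiv.Perm N => σ (π x)) hh
    simp only [Equiv.Perm.mul_apply] at h2
    have hl : ∀ (a b : N), leftReg N a b = a * b := fun a b => rfl
    rw [hl, Equiv.Perm.coe_inv, Equiv.symm_apply_apply, hl] at h2
    exact h2.symm
  choose F hF using key
  have hFmul : ∀ g h : N, F (g * h) = F g * F h := by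
    intro g h
    have h1 : F (g * h) * π 1 = (F g * F h) * π 1 := by
      calc F (g * h) * π 1 = π ((g * h) * 1) := (hF (g*h) 1).symm
      _ = π (g * (h * 1)) := by rw [mul_assoc]
      _ = F g * π (h * 1) := hF g (h*1)
      _ = F g * (F h * π 1) := by rw [hF h 1]
      _ = (F g * F h) * π 1 := by rw [mul_assoc]
    exact mul_right_cancel h1
  refine ⟨MonoidHom.mk' F hFmul, ?_, ?_⟩
  · intro g g' hgg
    have hgg' : F g = F g' := hgg
    have h1 : π (g * 1) = π (g' * 1) := by rw [hF g 1, hF g' 1, hgg']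
    have := π.injective h1
    simpa using this
  · intro g
    have := hF g 1
    rwa [mul_one] at this

variable {n : ℕ}

def EvenF (π : Equiv.Perm (DihedralGroup n)) (a k₁ k₂ : ZMod n) : Prop :=
  (∀ i, π (r i) = r (a * i + k₁)) ∧ (∀ i, π (sr i) = sr (a * i + k₂))

def OddF (π : Equiv.Perm (DihedralGroup n)) (a k₁ k₂ : ZMod n) : Prop :=
  (∀ i, π (r i) = sr (a * i + k₁)) ∧ (∀ i, π (sr i) = r (a * i + k₂))

lemma zmod_half (hodd : Odd n) {k : ZMod n} (h : k + k = 0) : k = 0 := by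
  obtain ⟨t, ht⟩ := hodd
  have h2 : (2 : ZMod n) * k = 0 := by rw [two_mul]; exact h
  have hu : ((t + 1 : ℕ) : ZMod n) * 2 = 1 := by
    have he : ((t+1) * 2 : ℕ) = n + 1 := by omega
    calc ((t+1 : ℕ) : ZMod n) * 2 = (((t+1) * 2 : ℕ) : ZMod n) := by push_cast; ring
    _ = ((n + 1 : ℕ) : ZMod n) := by rw [he]
    _ = 1 := by push_cast [ZMod.natCast_self]; ring
  calc k = 1 * k := (one_mul k).symm
  _ = (((t+1 : ℕ) : ZMod n) * 2) * k := by rw [hu]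
  _ = ((t+1 : ℕ) : ZMod n) * ((2 : ZMod n) * k) := by ring
  _ = 0 := by rw [h2, mul_zero]

lemma endo_classify [NeZero n] (hn2 : 2 < n) (hodd : Odd n)
    (f : DihedralGroup n →* DihedralGroup n) (hf : Function.Injective f) :
    ∃ j c : ZMod n, (∀ i, f (r i) = r (j * i)) ∧ (∀ i, f (sr i) = sr (j * i + c)) := by
  have hcast : ∀ i : ZMod n, ((i.val : ℕ) : ZMod n) = i := by
    intro i; rw [ZMod.natCast_val, ZMod.cast_id]
  have hord : orderOf (f (r 1)) = n := by rw [orderOf_injective f hf, orderOf_r_one]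
  rcases h1 : f (r 1) with j | j
  swap
  · exfalso; rw [h1, orderOf_sr] at hord; omega
  have hrpow : ∀ m : ℕ, (r j : DihedralGroup n) ^ m = r (j * (m : ZMod n)) := by
    intro m
    rw [← hcast j, ← r_one_pow, ← pow_mul, r_one_pow]
    push_cast; ring_nf
  have hri : ∀ i : ZMod n, f (r i) = r (j * i) := by
    intro i
    rw [← hcast i, ← r_one_pow, map_pow, h1, hrpow, hcast i]
  have hsr0 : ∃ c, f (sr 0) = sr c := by
    rcases h0 : f (sr 0) with k | c
    · exfalso
      have h2 : orderOf (f (sr 0)) = 2 := by rw [orderOf_injective f hf, orderOf_sr]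
      rw [h0] at h2
      have hk2 : (r k : DihedralGroup n) * r k = 1 := by
        have := pow_orderOf_eq_one (r k : DihedralGroup n)
        rwa [h2, pow_two] at this
      rw [r_mul_r, DihedralGroup.one_def] at hk2
      have hkk : k + k = 0 := by injection hk2
      have hk0 : k = 0 := zmod_half hodd hkk
      have : f (sr 0) = f 1 := by rw [h0, hk0, ← DihedralGroup.one_def, map_one]
      have := hf this
      simp [DihedralGroup.one_def, -DihedralGroup.r_zero] at this
    · exact ⟨c, rfl⟩
  obtain ⟨c, hc⟩ := hsr0
  refine ⟨j, c, hri, fun i => ?_⟩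
  have : (sr i : DihedralGroup n) = sr 0 * r i := by rw [sr_mul_r, zero_add]
  rw [this, map_mul, hc, hri, sr_mul_r, add_comm]

lemma hol_form [NeZero n] (hn2 : 2 < n) (hodd : Odd n)
    {π : Equiv.Perm (DihedralGroup n)} (hπ : π ∈ Hol (DihedralGroup n)) :
    ∃ a k₁ k₂ : ZMod n, EvenF π a k₁ k₂ ∨ OddF π a k₁ k₂ := by
  obtain ⟨f, hf, hdec⟩ := hol_decomp hπ
  obtain ⟨j, c, hr, hsr⟩ := endo_classify hn2 hodd f hf
  rcases h1 : π 1 with k | k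
  · refine ⟨j, k, c + k, Or.inl ⟨fun i => ?_, fun i => ?_⟩⟩
    · rw [hdec, hr, h1, r_mul_r]
    · rw [hdec, hsr, h1, sr_mul_r, add_assoc]
  · refine ⟨-j, k, k - c, Or.inr ⟨fun i => ?_, fun i => ?_⟩⟩
    · rw [hdec, hr, h1, r_mul_sr]; congr 1; ring
    · rw [hdec, hsr, h1, sr_mul_sr]; congr 1; ring

lemma EvenF.mul {π σ : Equiv.Perm (DihedralGroup n)} {a k₁ k₂ a' l₁ l₂ : ZMod n}
    (h : EvenF π a k₁ k₂) (h' : EvenF σ a' l₁ l₂) :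
    EvenF (π * σ) (a * a') (a * l₁ + k₁) (a * l₂ + k₂) := by
  constructor <;> intro i <;>
    simp only [Equiv.Perm.mul_apply, h'.1, h'.2, h.1, h.2] <;> congr 1 <;> ring

lemma EvenF.one : EvenF (1 : Equiv.Perm (DihedralGroup n)) 1 0 0 :=
  ⟨fun i => by simp, fun i => by simp⟩

lemma EvenF.congr {π : Equiv.Perm (DihedralGroup n)} {a k₁ k₂ a' k₁' k₂' : ZMod n}
    (h : EvenF π a k₁ k₂) (ha : a' = a) (h1 : k₁' = k₁) (h2 : k₂' = k₂) :
    EvenF π a' k₁' k₂' := by subst ha h1 h2; exact h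

lemma EvenF.pow {π : Equiv.Perm (DihedralGroup n)} {a k₁ k₂ : ZMod n}
    (h : EvenF π a k₁ k₂) : ∀ m : ℕ, ∃ K₁ K₂, EvenF (π ^ m) (a ^ m) K₁ K₂ := by
  intro m
  induction m with
  | zero => exact ⟨0, 0, by rw [pow_zero, pow_zero]; exact EvenF.one⟩
  | succ m ih =>
    obtain ⟨K₁, K₂, hm⟩ := ih
    exact ⟨_, _, by rw [pow_succ, pow_succ]; exact hm.mul h⟩

lemma EvenF.pow_one' {π : Equiv.Perm (DihedralGroup n)} {k₁ k₂ : ZMod n}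
    (h : EvenF π 1 k₁ k₂) (m : ℕ) : EvenF (π ^ m) 1 (m • k₁) (m • k₂) := by
  induction m with
  | zero => rw [pow_zero]; exact EvenF.one.congr rfl (by simp) (by simp)
  | succ m ih =>
    rw [pow_succ]
    exact (ih.mul h).congr (by ring) (by rw [succ_nsmul]; ring) (by rw [succ_nsmul]; ring)

def R2R (π : Equiv.Perm (DihedralGroup n)) : Prop :=
  (∀ i, ∃ j, π (r i) = r j) ∧ (∀ i, ∃ j, π (sr i) = sr j)

def R2S (π : Equiv.Perm (DihedralGroup n)) : Prop :=
  (∀ i, ∃ j, π (r i) = sr j) ∧ (∀ i, ∃ j, π (sr i) = r j)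

lemma R2S.mul_self {π σ : Equiv.Perm (DihedralGroup n)} (h : R2S π) (h' : R2S σ) :
    R2R (π * σ) := by
  constructor <;> intro i
  · obtain ⟨j, hj⟩ := h'.1 i
    obtain ⟨j', hj'⟩ := h.2 j
    exact ⟨j', by rw [Equiv.Perm.mul_apply, hj, hj']⟩
  · obtain ⟨j, hj⟩ := h'.2 i
    obtain ⟨j', hj'⟩ := h.1 j
    exact ⟨j', by rw [Equiv.Perm.mul_apply, hj, hj']⟩

lemma R2R.mul {π σ : Equiv.Perm (DihedralGroup n)} (h : R2R π) (h' : R2R σ) :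
    R2R (π * σ) := by
  constructor <;> intro i
  · obtain ⟨j, hj⟩ := h'.1 i
    obtain ⟨j', hj'⟩ := h.1 j
    exact ⟨j', by rw [Equiv.Perm.mul_apply, hj, hj']⟩
  · obtain ⟨j, hj⟩ := h'.2 i
    obtain ⟨j', hj'⟩ := h.2 j
    exact ⟨j', by rw [Equiv.Perm.mul_apply, hj, hj']⟩

lemma R2R.one : R2R (1 : Equiv.Perm (DihedralGroup n)) :=
  ⟨fun i => ⟨i, by simp⟩, fun i => ⟨i, by simp⟩⟩

lemma R2R.mul_R2S {τ π : Equiv.Perm (DihedralGroup n)} (h : R2R τ) (h' : R2S π) :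
    R2S (τ * π) := by
  constructor <;> intro i
  · obtain ⟨j, hj⟩ := h'.1 i
    obtain ⟨j', hj'⟩ := h.2 j
    exact ⟨j', by rw [Equiv.Perm.mul_apply, hj, hj']⟩
  · obtain ⟨j, hj⟩ := h'.2 i
    obtain ⟨j', hj'⟩ := h.1 j
    exact ⟨j', by rw [Equiv.Perm.mul_apply, hj, hj']⟩

lemma R2S.pow_odd {π : Equiv.Perm (DihedralGroup n)} (h : R2S π) (m : ℕ) :
    R2S (π ^ (2 * m + 1)) := by
  have h2 : R2R (π ^ 2) := by rw [pow_two]; exact h.mul_self h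
  have hk : ∀ k : ℕ, R2R ((π ^ 2) ^ k) := by
    intro k
    induction k with
    | zero => rw [pow_zero]; exact R2R.one
    | succ k ih => rw [pow_succ]; exact ih.mul h2
  have : π ^ (2 * m + 1) = (π ^ 2) ^ m * π := by rw [pow_succ, pow_mul]
  rw [this]
  exact (hk m).mul_R2S h

lemma R2S.pow_odd_ne_one {π : Equiv.Perm (DihedralGroup n)} (h : R2S π) (m : ℕ) :
    π ^ (2 * m + 1) ≠ 1 := by
  intro he
  obtain ⟨j, hj⟩ := (h.pow_odd m).1 0
  rw [he] at hj
  simp [-DihedralGroup.r_zero] at hj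

end HolAux
namespace HolAux
open DihedralGroup Equiv

lemma unit_eq_one (p q : ℕ) (hp : p.Prime) (hq : q.Prime) (hlt : q < p)
    {a : ZMod (p * q)} (hap : a ^ p = 1) : a = 1 := by
  haveI : NeZero (p * q) := ⟨Nat.mul_ne_zero hp.pos.ne' hq.pos.ne'⟩
  have hu : IsUnit a := by
    refine IsUnit.of_mul_eq_one (a := a) (a ^ (p - 1)) ?_
    rw [← pow_succ']
    have : p - 1 + 1 = p := Nat.succ_pred_eq_of_pos hp.pos
    rw [this, hap]
  obtain ⟨u, rfl⟩ := hu
  have hup : u ^ p = 1 := by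
    apply Units.ext
    rw [Units.val_pow_eq_pow_val, hap, Units.val_one]
  have h1 : orderOf u ∣ p := orderOf_dvd_of_pow_eq_one hup
  have h2 : orderOf u ∣ (p - 1) * (q - 1) := by
    have hco : Nat.Coprime p q := (Nat.coprime_primes hp hq).mpr hlt.ne'
    have := orderOf_dvd_card (x := u)
    rwa [ZMod.card_units_eq_totient, Nat.totient_mul hco, Nat.totient_prime hp,
      Nat.totient_prime hq] at this
  have hcop : Nat.Coprime p ((p - 1) * (q - 1)) := by
    refine (Nat.Prime.coprime_iff_not_dvd hp).mpr ?_
    intro hdvd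
    rcases (Nat.Prime.dvd_mul hp).mp hdvd with h | h
    · have h2l := hp.two_le; have := Nat.le_of_dvd (by omega : 0 < p - 1) h; omega
    · have h2l := hq.two_le; have := Nat.le_of_dvd (by omega : 0 < q - 1) h; omega
  have hdvd1 : orderOf u ∣ 1 := hcop ▸ Nat.dvd_gcd h1 h2
  have : u = 1 := orderOf_eq_one_iff.mp (Nat.dvd_one.mp hdvd1)
  rw [this, Units.val_one]

section Core

variable {p q : ℕ}

lemma p_elt_form (hp : p.Prime) (hq : q.Prime) (hpodd : Odd p) (hqodd : Odd q) (hlt : q < p)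
    {π : Equiv.Perm (DihedralGroup (p * q))} (hπ : π ∈ Hol (DihedralGroup (p * q)))
    (hp1 : π ^ p = 1) :
    ∃ k₁ k₂ : ZMod (p * q), (p : ZMod (p * q)) * k₁ = 0 ∧ (p : ZMod (p * q)) * k₂ = 0 ∧
      EvenF π 1 k₁ k₂ := by
  haveI : NeZero (p * q) := ⟨Nat.mul_ne_zero hp.pos.ne' hq.pos.ne'⟩
  have hn2 : 2 < p * q := by
    have h1 := hp.two_le; have h2 := hq.two_le; nlinarith
  have hodd : Odd (p * q) := hpodd.mul hqodd
  obtain ⟨a, k₁, k₂, he | ho⟩ := hol_form hn2 hodd hπ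
  · obtain ⟨K₁, K₂, hK⟩ := he.pow p
    rw [hp1] at hK
    have e0 := hK.1 0
    simp only [Equiv.Perm.one_apply, mul_zero, zero_add, DihedralGroup.r.injEq] at e0
    have e1 := hK.1 1
    simp only [Equiv.Perm.one_apply, mul_one, DihedralGroup.r.injEq] at e1
    have hap : a ^ p = 1 := by rw [← e0, add_zero] at e1; exact e1.symm
    have ha : a = 1 := unit_eq_one p q hp hq hlt hap
    rw [ha] at he
    have h2 := he.pow_one' p
    rw [hp1] at h2
    have t1 := h2.1 0
    simp only [Equiv.Perm.one_apply, mul_zero, zero_add, DihedralGroup.r.injEq] at t1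
    have t2 := h2.2 0
    simp only [Equiv.Perm.one_apply, mul_zero, zero_add, DihedralGroup.sr.injEq] at t2
    refine ⟨k₁, k₂, ?_, ?_, he⟩
    · rw [← nsmul_eq_mul]; exact t1.symm
    · rw [← nsmul_eq_mul]; exact t2.symm
  · exfalso
    obtain ⟨m, hm⟩ := hpodd
    have hs : R2S π := ⟨fun i => ⟨_, ho.1 i⟩, fun i => ⟨_, ho.2 i⟩⟩
    exact hs.pow_odd_ne_one m (by rw [← hm]; exact hp1)

lemma q_elt_form (hp : p.Prime) (hq : q.Prime) (hpodd : Odd p) (hqodd : Odd q)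
    {π : Equiv.Perm (DihedralGroup (p * q))} (hπ : π ∈ Hol (DihedralGroup (p * q)))
    (hq1 : π ^ q = 1) :
    ∃ a l₁ l₂ : ZMod (p * q), EvenF π a l₁ l₂ := by
  haveI : NeZero (p * q) := ⟨Nat.mul_ne_zero hp.pos.ne' hq.pos.ne'⟩
  have hn2 : 2 < p * q := by
    have h1 := hp.two_le; have h2 := hq.two_le; nlinarith
  have hodd : Odd (p * q) := hpodd.mul hqodd
  obtain ⟨a, k₁, k₂, he | ho⟩ := hol_form hn2 hodd hπ
  · exact ⟨a, k₁, k₂, he⟩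
  · exfalso
    obtain ⟨m, hm⟩ := hqodd
    have hs : R2S π := ⟨fun i => ⟨_, ho.1 i⟩, fun i => ⟨_, ho.2 i⟩⟩
    exact hs.pow_odd_ne_one m (by rw [← hm]; exact hq1)

lemma comm_iff {n : ℕ} {B σ : Equiv.Perm (DihedralGroup n)} {a l₁ l₂ u₁ u₂ : ZMod n}
    (hB : EvenF B a l₁ l₂) (hσ : EvenF σ 1 u₁ u₂) :
    B * σ = σ * B ↔ (a * u₁ = u₁ ∧ a * u₂ = u₂) := by
  constructor
  · intro h
    constructor
    · have h0 := congrArg (fun τ : Equiv.Perm (DihedralGroup n) => τ (r 0)) h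
      simp only [Equiv.Perm.mul_apply, hσ.1, hB.1, DihedralGroup.r.injEq] at h0
      linear_combination h0
    · have h0 := congrArg (fun τ : Equiv.Perm (DihedralGroup n) => τ (sr 0)) h
      simp only [Equiv.Perm.mul_apply, hσ.2, hB.2, DihedralGroup.sr.injEq] at h0
      linear_combination h0
  · rintro ⟨h1, h2⟩
    apply Equiv.ext
    intro z
    rcases z with i | i
    · simp only [Equiv.Perm.mul_apply]
      rw [hσ.1, hB.1, hB.1, hσ.1]
      congr 1
      linear_combination h1
    · simp only [Equiv.Perm.mul_apply]
      rw [hσ.2, hB.2, hB.2, hσ.2]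
      congr 1
      linear_combination h2

lemma core (hp : p.Prime) (hq : q.Prime) (hpodd : Odd p) (hqodd : Odd q) (hlt : q < p)
    {X Y B : Equiv.Perm (DihedralGroup (p * q))}
    (hX : X ∈ Hol (DihedralGroup (p * q))) (hY : Y ∈ Hol (DihedralGroup (p * q)))
    (hB : B ∈ Hol (DihedralGroup (p * q)))
    (hXp : X ^ p = 1) (hYp : Y ^ p = 1) (hY1 : Y ≠ 1) (hBq : B ^ q = 1)
    (hBY : B * Y = Y * B) (hBX : B * X ≠ X * B) : False := by
  haveI : NeZero (p * q) := ⟨Nat.mul_ne_zero hp.pos.ne' hq.pos.ne'⟩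
  obtain ⟨k₁, k₂, ht1, ht2, hXf⟩ := p_elt_form hp hq hpodd hqodd hlt hX hXp
  obtain ⟨m₁, m₂, hs1, hs2, hYf⟩ := p_elt_form hp hq hpodd hqodd hlt hY hYp
  obtain ⟨a, l₁, l₂, hBf⟩ := q_elt_form hp hq hpodd hqodd hB hBq
  obtain ⟨hm1, hm2⟩ := (comm_iff hBf hYf).mp hBY
  have hnc : ¬ (a * k₁ = k₁ ∧ a * k₂ = k₂) := fun hc => hBX ((comm_iff hBf hXf).mpr hc)
  -- get a p-torsion v with a * v ≠ v
  have hex : ∃ v : ZMod (p * q), (p : ZMod (p * q)) * v = 0 ∧ a * v ≠ v := by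
    rcases not_and_or.mp hnc with h | h
    · exact ⟨k₁, ht1, h⟩
    · exact ⟨k₂, ht2, h⟩
  obtain ⟨v, hv, hav⟩ := hex
  set d : ZMod (p * q) := a - 1 with hd
  have hdv : d * v ≠ 0 := by
    rw [hd, sub_mul, one_mul]
    exact sub_ne_zero.mpr hav
  have hpd : ¬ (p ∣ d.val) := by
    rintro ⟨m, hm⟩
    apply hdv
    have hdc : d = ((d.val : ℕ) : ZMod (p * q)) := by rw [ZMod.natCast_val, ZMod.cast_id]
    rw [hdc, hm]
    have : (((p * m : ℕ)) : ZMod (p * q)) * v = ((m : ℕ) : ZMod (p * q)) * ((p : ZMod (p * q)) * v) := by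
      push_cast; ring
    rw [this, hv, mul_zero]
  have hco : Nat.Coprime p d.val := (Nat.Prime.coprime_iff_not_dvd hp).mpr hpd
  have hbez : (1 : ℤ) = (p : ℤ) * Nat.gcdA p d.val + (d.val : ℤ) * Nat.gcdB p d.val := by
    have := Nat.gcd_eq_gcd_ab p d.val
    rwa [hco, Nat.cast_one] at this
  have hzz : (1 : ZMod (p * q)) =
      (p : ZMod (p * q)) * ((Nat.gcdA p d.val : ℤ) : ZMod (p * q)) +
      d * ((Nat.gcdB p d.val : ℤ) : ZMod (p * q)) := by
    have := congrArg (fun z : ℤ => (z : ZMod (p * q))) hbez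
    push_cast at this
    rwa [ZMod.natCast_val, ZMod.cast_id] at this
  have kill : ∀ w : ZMod (p * q), (p : ZMod (p * q)) * w = 0 → d * w = 0 → w = 0 := by
    intro w hw1 hw2
    calc w = 1 * w := (one_mul w).symm
    _ = ((p : ZMod (p * q)) * ((Nat.gcdA p d.val : ℤ) : ZMod (p * q)) +
        d * ((Nat.gcdB p d.val : ℤ) : ZMod (p * q))) * w := by rw [← hzz]
    _ = ((Nat.gcdA p d.val : ℤ) : ZMod (p * q)) * ((p : ZMod (p * q)) * w) +
        ((Nat.gcdB p d.val : ℤ) : ZMod (p * q)) * (d * w) := by ring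
    _ = 0 := by rw [hw1, hw2, mul_zero, mul_zero, add_zero]
  have hm10 : m₁ = 0 := kill m₁ hs1 (by rw [hd, sub_mul, one_mul, hm1, sub_self])
  have hm20 : m₂ = 0 := kill m₂ hs2 (by rw [hd, sub_mul, one_mul, hm2, sub_self])
  apply hY1
  apply Equiv.ext
  intro z
  rcases z with i | i
  · rw [hYf.1 i, hm10]; simp
  · rw [hYf.2 i, hm20]; simp

end Core
end HolAux
namespace HolAux

/-- The "right regular representation" of `A` inside `A ⋊ Aut(A)`. -/
def rhoHom (A : Type*) [Group A] :
    A →* SemidirectProduct A (MulAut A) (MonoidHom.id (MulAut A)) where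
  toFun a := ⟨a⁻¹, MulAut.conj a⟩
  map_one' := by
    ext
    · simp
    · simp
  map_mul' a b := by
    ext
    · simp only [SemidirectProduct.mul_left, MonoidHom.id_apply, MulAut.conj_apply,
        mul_inv_rev]
      group
    · simp only [SemidirectProduct.mul_right, map_mul]

lemma exists_triple {A : Type*} [Group A] (p q : ℕ) (a₀ g : A)
    (ha : a₀ ^ p = 1) (ha1 : a₀ ≠ 1) (hg : g ^ q = 1) (hcomm : g * a₀ ≠ a₀ * g) :
    ∃ x y b : SemidirectProduct A (MulAut A) (MonoidHom.id (MulAut A)),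
      x ^ p = 1 ∧ y ^ p = 1 ∧ y ≠ 1 ∧ b ^ q = 1 ∧ b * y = y * b ∧ b * x ≠ x * b := by
  refine ⟨SemidirectProduct.inl a₀, rhoHom A a₀, SemidirectProduct.inl g, ?_, ?_, ?_, ?_, ?_, ?_⟩
  · rw [← map_pow, ha, map_one]
  · rw [← map_pow, ha, map_one]
  · intro h
    have h1 := congrArg SemidirectProduct.left h
    simp only [rhoHom, MonoidHom.coe_mk, OneHom.coe_mk, SemidirectProduct.one_left] at h1
    exact ha1 (inv_eq_one.mp h1)
  · rw [← map_pow, hg, map_one]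
  · ext
    · simp only [SemidirectProduct.mul_left, SemidirectProduct.left_inl,
        SemidirectProduct.right_inl, map_one, MonoidHom.id_apply, MulAut.one_apply]
      show g * (rhoHom A a₀).left = (rhoHom A a₀).left * ((rhoHom A a₀).right) g
      simp only [rhoHom, MonoidHom.coe_mk, OneHom.coe_mk, MulAut.conj_apply]
      group
    · simp only [SemidirectProduct.mul_right, SemidirectProduct.right_inl, mul_one, one_mul]
  · intro h
    rw [← map_mul, ← map_mul] at h
    exact hcomm (SemidirectProduct.inl_injective h)

/-- An automorphism of `Multiplicative (ZMod m)` fixing `ofAdd 1` is the identity. -/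
lemma fix_gen {m : ℕ} [NeZero m] (σ : MulAut (Multiplicative (ZMod m)))
    (h : σ (Multiplicative.ofAdd 1) = Multiplicative.ofAdd 1) : σ = 1 := by
  have key : ∀ z : Multiplicative (ZMod m), σ z = z := by
    intro z
    have hz : z = (Multiplicative.ofAdd (1 : ZMod m)) ^ (Multiplicative.toAdd z).val := by
      rw [← ofAdd_nsmul]
      rw [nsmul_eq_mul, mul_one, ZMod.natCast_val, ZMod.cast_id]
      exact (ofAdd_toAdd z).symm
    rw [hz, map_pow, h]
  exact MulEquiv.ext fun z => (key z).trans rfl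

lemma pow_ofAdd_self {m : ℕ} : (Multiplicative.ofAdd (1 : ZMod m)) ^ m = 1 := by
  rw [← ofAdd_nsmul, nsmul_eq_mul, mul_one, ZMod.natCast_self, ofAdd_zero]

end HolAux
namespace HolAux

lemma no_iso {p q : ℕ} (hp : p.Prime) (hq : q.Prime) (hpodd : Odd p) (hqodd : Odd q)
    (hlt : q < p) {A : Type*} [Group A]
    (a₀ g : A) (ha : a₀ ^ p = 1) (ha1 : a₀ ≠ 1) (hg : g ^ q = 1) (hcomm : g * a₀ ≠ a₀ * g)
    (M : Subgroup (Equiv.Perm (DihedralGroup (p * q))))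
    (hM : M ≤ Hol (DihedralGroup (p * q))) :
    ¬ Nonempty (M ≃* SemidirectProduct A (MulAut A) (MonoidHom.id (MulAut A))) := by
  rintro ⟨e⟩
  obtain ⟨x, y, b, hx, hy, hy1, hb, hby, hbx⟩ := exists_triple p q a₀ g ha ha1 hg hcomm
  let F : SemidirectProduct A (MulAut A) (MonoidHom.id (MulAut A)) →*
      Equiv.Perm (DihedralGroup (p * q)) := M.subtype.comp e.symm.toMonoidHom
  have hFinj : Function.Injective F := by
    have : (F : _ → _) = (M.subtype : M → _) ∘ e.symm := rfl
    rw [this]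
    exact M.subtype_injective.comp e.symm.injective
  have hmem : ∀ w, F w ∈ Hol (DihedralGroup (p * q)) := fun w => hM (e.symm w).2
  refine core hp hq hpodd hqodd hlt (hmem x) (hmem y) (hmem b) ?_ ?_ ?_ ?_ ?_ ?_
  · rw [← map_pow, hx, map_one]
  · rw [← map_pow, hy, map_one]
  · intro h
    exact hy1 (hFinj (h.trans (map_one F).symm))
  · rw [← map_pow, hb, map_one]
  · rw [← map_mul, ← map_mul, hby]
  · intro h
    rw [← map_mul, ← map_mul] at h
    exact hbx (hFinj h)

end HolAux

theorem no_transitive_subgroup_iso_hol_N5_or_N6 (p q : ℕ)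
    (hp : p.Prime) (hq : q.Prime) (hpodd : Odd p) (hqodd : Odd q) (hlt : q < p)
    (hmod : p ≡ 1 [MOD q])
    (φ : Multiplicative (ZMod q) →* MulAut (Multiplicative (ZMod p)))
    (hφ : Function.Injective φ)
    (ψ : Multiplicative (ZMod (2 * q)) →* MulAut (Multiplicative (ZMod p)))
    (hψ : Function.Injective ψ)
    (M : Subgroup (Equiv.Perm (DihedralGroup (p * q))))
    (hM : M ≤ Hol (DihedralGroup (p * q)))
    (htrans : IsTransitiveSubgroup M) :
    ¬ Nonempty (M ≃*
        SemidirectProduct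
          (Multiplicative (ZMod 2) ×
            SemidirectProduct (Multiplicative (ZMod p)) (Multiplicative (ZMod q)) φ)
          (MulAut (Multiplicative (ZMod 2) ×
            SemidirectProduct (Multiplicative (ZMod p)) (Multiplicative (ZMod q)) φ))
          (MonoidHom.id (MulAut (Multiplicative (ZMod 2) ×
            SemidirectProduct (Multiplicative (ZMod p)) (Multiplicative (ZMod q)) φ)))) ∧
    ¬ Nonempty (M ≃*
        SemidirectProduct
          (SemidirectProduct (Multiplicative (ZMod p)) (Multiplicative (ZMod (2 * q))) ψ)
          (MulAut (SemidirectProduct (Multiplicative (ZMod p)) (Multiplicative (ZMod (2 * q))) ψ))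
          (MonoidHom.id
            (MulAut (SemidirectProduct (Multiplicative (ZMod p)) (Multiplicative (ZMod (2 * q))) ψ)))) := by
  haveI : NeZero p := ⟨hp.pos.ne'⟩
  haveI : NeZero q := ⟨hq.pos.ne'⟩
  haveI : NeZero (2 * q) := ⟨by have := hq.pos; omega⟩
  haveI : Fact (1 < p) := ⟨hp.one_lt⟩
  haveI : Fact (1 < q) := ⟨hq.one_lt⟩
  constructor
  · -- N₅ case
    set G := SemidirectProduct (Multiplicative (ZMod p)) (Multiplicative (ZMod q)) φ
    refine HolAux.no_iso hp hq hpodd hqodd hlt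
      ((1 : Multiplicative (ZMod 2)), SemidirectProduct.inl (Multiplicative.ofAdd (1 : ZMod p)))
      ((1 : Multiplicative (ZMod 2)), SemidirectProduct.inr (Multiplicative.ofAdd (1 : ZMod q)))
      ?_ ?_ ?_ ?_ M hM
    · apply Prod.ext
      · simp
      · show (SemidirectProduct.inl (Multiplicative.ofAdd (1 : ZMod p)) : G) ^ p = 1
        rw [← map_pow, HolAux.pow_ofAdd_self, map_one]
    · intro h
      have h2 := congrArg Prod.snd h
      simp only [Prod.snd_one] at h2
      have h3 : (SemidirectProduct.inl (Multiplicative.ofAdd (1 : ZMod p)) : G) =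
          SemidirectProduct.inl 1 :=
        h2.trans (map_one (SemidirectProduct.inl :
          Multiplicative (ZMod p) →* G)).symm
      have h4 := SemidirectProduct.inl_injective h3
      have h5 : (1 : ZMod p) = 0 := by
        have := congrArg Multiplicative.toAdd h4
        simpa using this
      exact one_ne_zero h5
    · apply Prod.ext
      · simp
      · show (SemidirectProduct.inr (Multiplicative.ofAdd (1 : ZMod q)) : G) ^ q = 1
        rw [← map_pow, HolAux.pow_ofAdd_self, map_one]
    · intro h
      have h2 := congrArg Prod.snd h
      simp only [Prod.snd_mul] at h2
      have h3 := congrArg SemidirectProduct.left h2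
      simp only [SemidirectProduct.mul_left, SemidirectProduct.left_inl,
        SemidirectProduct.right_inl, SemidirectProduct.left_inr, SemidirectProduct.right_inr,
        map_one, MulAut.one_apply, one_mul, mul_one] at h3
      -- h3 : φ (ofAdd 1) (ofAdd 1) = ofAdd 1
      have h4 : φ (Multiplicative.ofAdd (1 : ZMod q)) = 1 := HolAux.fix_gen _ h3
      have h5 : Multiplicative.ofAdd (1 : ZMod q) = 1 := by
        apply hφ; rw [h4, map_one]
      have h6 : (1 : ZMod q) = 0 := by
        have := congrArg Multiplicative.toAdd h5
        simpa using this
      exact one_ne_zero h6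
  · -- N₆ case
    set G := SemidirectProduct (Multiplicative (ZMod p)) (Multiplicative (ZMod (2 * q))) ψ
    refine HolAux.no_iso hp hq hpodd hqodd hlt
      (SemidirectProduct.inl (Multiplicative.ofAdd (1 : ZMod p)) : G)
      (SemidirectProduct.inr (Multiplicative.ofAdd (2 : ZMod (2 * q))) : G)
      ?_ ?_ ?_ ?_ M hM
    · rw [← map_pow, HolAux.pow_ofAdd_self, map_one]
    · intro h
      have h3 : (SemidirectProduct.inl (Multiplicative.ofAdd (1 : ZMod p)) : G) =
          SemidirectProduct.inl 1 :=
        h.trans (map_one (SemidirectProduct.inl :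
          Multiplicative (ZMod p) →* G)).symm
      have h4 := SemidirectProduct.inl_injective h3
      have h5 : (1 : ZMod p) = 0 := by
        have := congrArg Multiplicative.toAdd h4
        simpa using this
      exact one_ne_zero h5
    · rw [← map_pow]
      have : (Multiplicative.ofAdd (2 : ZMod (2 * q))) ^ q = 1 := by
        rw [← ofAdd_nsmul, nsmul_eq_mul]
        have : ((q : ZMod (2 * q))) * 2 = ((q * 2 : ℕ) : ZMod (2 * q)) := by push_cast; ring
        rw [this, show q * 2 = 2 * q from by ring, ZMod.natCast_self, ofAdd_zero]
      rw [this, map_one]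
    · intro h
      have h3 := congrArg SemidirectProduct.left h
      simp only [SemidirectProduct.mul_left, SemidirectProduct.left_inl,
        SemidirectProduct.right_inl, SemidirectProduct.left_inr, SemidirectProduct.right_inr,
        map_one, MulAut.one_apply, one_mul, mul_one] at h3
      have h4 : ψ (Multiplicative.ofAdd (2 : ZMod (2 * q))) = 1 := HolAux.fix_gen _ h3
      have h5 : Multiplicative.ofAdd (2 : ZMod (2 * q)) = 1 := by
        apply hψ; rw [h4, map_one]
      have h6 : (2 : ZMod (2 * q)) = 0 := by
        have := congrArg Multiplicative.toAdd h5
        simpa using this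
      have h7 : ((2 : ℕ) : ZMod (2 * q)) = 0 := by push_cast; exact h6
      have h8 : (2 * q) ∣ 2 := (ZMod.natCast_eq_zero_iff 2 (2*q)).mp h7
      have := Nat.le_of_dvd (by norm_num) h8
      have := hq.two_le
      omega
end

section
/- Let p > q be odd primes. Then Hol(D_{pq}) contains a regular subgroup isomorphic to the cyclic group C_{2pq}; that is, there exists a subgroup M of Equiv.Perm (DihedralGroup (p*q)) contained in Hol(D_{pq}) such that M is transitive on DihedralGroup (p*q), M has order 2pq (equivalently, the stabilizer in M of every point is trivial), and M is isomorphic as a group to Multiplicative (ZMod (2*p*q)). -/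
open DihedralGroup in
def dihSig (n : ℕ) : Equiv.Perm (DihedralGroup n) where
  toFun x := match x with
    | .r i => .sr i
    | .sr i => .r (i + 1)
  invFun x := match x with
    | .sr i => .r i
    | .r i => .sr (i - 1)
  left_inv x := by cases x <;> simp
  right_inv x := by cases x <;> simp

lemma dihSig_r {n : ℕ} (i : ZMod n) : dihSig n (.r i) = .sr i := rfl
lemma dihSig_sr {n : ℕ} (i : ZMod n) : dihSig n (.sr i) = .r (i + 1) := rfl

lemma dihSig_sq {n : ℕ} (x : DihedralGroup n) :
    (dihSig n ^ 2) x = x * .r 1 := by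
  cases x with
  | r i => simp [pow_succ, dihSig_r, dihSig_sr, DihedralGroup.r_mul_r]
  | sr i => simp [pow_succ, dihSig_r, dihSig_sr, DihedralGroup.sr_mul_r]

lemma dihSig_even {n : ℕ} (t : ℕ) (x : DihedralGroup n) :
    (dihSig n ^ (2 * t)) x = x * .r (t : ZMod n) := by
  induction t generalizing x with
  | zero => simp [DihedralGroup.one_def.symm]
  | succ t ih =>
    have : 2 * (t + 1) = 2 * t + 2 := by ring
    rw [this, pow_add, Equiv.Perm.mul_apply, dihSig_sq, ih, mul_assoc,
      DihedralGroup.r_mul_r]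
    push_cast
    ring_nf

def dihConj (n : ℕ) : DihedralGroup n → DihedralGroup n
  | .r i => .r (-i)
  | .sr i => .sr (-(i + 1))

lemma dihSig_symm_r {n : ℕ} (i : ZMod n) : (dihSig n).symm (.r i) = .sr (i - 1) := rfl
lemma dihSig_symm_sr {n : ℕ} (i : ZMod n) : (dihSig n).symm (.sr i) = .r i := rfl

lemma dihConj_conj {n : ℕ} (g : DihedralGroup n) :
    dihSig n * Equiv.mulLeft g * (dihSig n)⁻¹ = Equiv.mulLeft (dihConj n g) := by
  ext x
  show dihSig n (g * (dihSig n).symm x) = dihConj n g * x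
  cases g <;> cases x <;>
    simp only [dihSig_symm_r, dihSig_symm_sr, DihedralGroup.r_mul_r, DihedralGroup.r_mul_sr,
      DihedralGroup.sr_mul_r, DihedralGroup.sr_mul_sr, dihSig_r, dihSig_sr, dihConj] <;>
    ring_nf

lemma dihConj_dihConj {n : ℕ} (g : DihedralGroup n) : dihConj n (dihConj n g) = g := by
  cases g <;> simp [dihConj]

lemma leftReg_eq_mulLeft {N : Type*} [Group N] (g : N) : leftReg N g = Equiv.mulLeft g := by
  ext x; rfl

lemma dihSig_mem_Hol (n : ℕ) : dihSig n ∈ Hol (DihedralGroup n) := by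
  rw [Hol, Subgroup.mem_normalizer_iff]
  intro h
  constructor
  · rintro ⟨g, rfl⟩
    exact ⟨dihConj n g, by rw [leftReg_eq_mulLeft, leftReg_eq_mulLeft, dihConj_conj]⟩
  · rintro ⟨g, hg⟩
    refine ⟨dihConj n g, ?_⟩
    rw [leftReg_eq_mulLeft] at hg ⊢
    have := dihConj_conj (n := n) (dihConj n g)
    rw [dihConj_dihConj, hg] at this
    exact mul_left_cancel (mul_right_cancel this)

lemma dihSig_orbit (n : ℕ) [NeZero n] (a : DihedralGroup n) :
    ∃ k : ℕ, (dihSig n ^ k) (.r 0) = a := by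
  cases a with
  | r i =>
    refine ⟨2 * i.val, ?_⟩
    rw [dihSig_even, DihedralGroup.r_mul_r, zero_add, ZMod.natCast_val, ZMod.cast_id]
  | sr i =>
    refine ⟨2 * i.val + 1, ?_⟩
    rw [pow_succ, Equiv.Perm.mul_apply, dihSig_r, dihSig_even, DihedralGroup.sr_mul_r,
      zero_add, ZMod.natCast_val, ZMod.cast_id]

lemma dihSig_orderOf (n : ℕ) [NeZero n] : orderOf (dihSig n) = 2 * n := by
  have hn : 0 < n := Nat.pos_of_ne_zero (NeZero.ne n)
  rw [orderOf_eq_iff (by omega)]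
  constructor
  · ext x
    rw [dihSig_even, ZMod.natCast_self]
    simp [DihedralGroup.one_def.symm]
  · intro m hm hm0 h1
    rcases Nat.even_or_odd m with ⟨t, ht⟩ | ⟨t, ht⟩
    · have h : (dihSig n ^ m) (.r 0) = .r 0 := by rw [h1]; rfl
      rw [ht, ← two_mul, dihSig_even, DihedralGroup.r_mul_r, zero_add] at h
      have : (t : ZMod n) = 0 := by injection h
      rw [ZMod.natCast_eq_zero_iff] at this
      have := Nat.le_of_dvd (by omega) this
      omega
    · have h : (dihSig n ^ m) (.r 0) = .r 0 := by rw [h1]; rfl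
      rw [ht, pow_succ, Equiv.Perm.mul_apply, dihSig_r, dihSig_even,
        DihedralGroup.sr_mul_r] at h
      exact absurd h (by intro h'; cases h')

theorem hol_dihedral_has_regular_cyclic_subgroup (p q : ℕ)
    (hp : p.Prime) (hq : q.Prime) (hpodd : Odd p) (hqodd : Odd q) (hlt : q < p) :
    ∃ M : Subgroup (Equiv.Perm (DihedralGroup (p * q))),
      M ≤ Hol (DihedralGroup (p * q)) ∧
      IsTransitiveSubgroup M ∧
      Nat.card M = 2 * p * q ∧
      Nonempty (M ≃* Multiplicative (ZMod (2 * p * q))) := by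
  haveI : NeZero (p * q) := ⟨Nat.mul_ne_zero hp.pos.ne' hq.pos.ne'⟩
  set n := p * q with hn
  refine ⟨Subgroup.zpowers (dihSig n), ?_, ?_, ?_, ?_⟩
  · rw [Subgroup.zpowers_le]
    exact dihSig_mem_Hol n
  · intro a b
    obtain ⟨j, hj⟩ := dihSig_orbit n a
    obtain ⟨k, hk⟩ := dihSig_orbit n b
    refine ⟨dihSig n ^ ((k : ℤ) - j), Subgroup.zpow_mem _ (Subgroup.mem_zpowers _) _, ?_⟩
    rw [← hj, ← hk]
    have h1 : (dihSig n ^ ((k : ℤ) - j)) ((dihSig n ^ j) (.r 0)) =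
        ((dihSig n ^ ((k : ℤ) - j)) * (dihSig n ^ (j : ℤ))) (.r 0) := by
      rw [Equiv.Perm.mul_apply, zpow_natCast]
    rw [h1, ← zpow_add, sub_add_cancel, zpow_natCast]
  · rw [Nat.card_zpowers, dihSig_orderOf]; ring
  · haveI : NeZero (2 * p * q) := ⟨by have := hp.pos; have := hq.pos; positivity⟩
    haveI : IsCyclic (Subgroup.zpowers (dihSig n)) := by
      refine ⟨⟨⟨dihSig n, Subgroup.mem_zpowers _⟩, ?_⟩⟩
      rintro ⟨x, hx⟩
      obtain ⟨k, hk⟩ := Subgroup.mem_zpowers_iff.mp hx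
      exact ⟨k, Subtype.ext (by simpa using hk)⟩
    refine ⟨mulEquivOfCyclicCardEq ?_⟩
    rw [Nat.card_zpowers, dihSig_orderOf, Nat.card_eq_fintype_card,
      Fintype.card_multiplicative, ZMod.card]
    ring
end

section
/- Let p > q be odd primes. Then Hol(C_p × D_q) contains a regular subgroup isomorphic to the cyclic group C_{2pq}, and Hol(C_q × D_p) contains a regular subgroup isomorphic to C_{2pq}. Here C_p × D_q = Multiplicative (ZMod p) × DihedralGroup q, C_q × D_p = Multiplicative (ZMod q) × DihedralGroup p, and C_{2pq} = Multiplicative (ZMod (2*p*q)); a regular subgroup of Hol(N) is a subgroup of Equiv.Perm N contained in Hol(N) that is transitive on N and has order |N|. -/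
namespace HolScratch

open DihedralGroup

lemma leftReg_apply {N : Type*} [Group N] (n x : N) : leftReg N n x = n * x := rfl

lemma leftReg_mem_Hol {N : Type*} [Group N] (n : N) : leftReg N n ∈ Hol N :=
  Subgroup.le_normalizer (H := (leftReg N).range) ⟨n, rfl⟩

lemma conj_leftReg {N : Type*} [Group N] (f : N ≃* N) (n : N) :
    (f.toEquiv : Equiv.Perm N) * (leftReg N n) * (f.toEquiv : Equiv.Perm N)⁻¹
      = leftReg N (f n) := by
  ext x
  simp [Equiv.Perm.mul_apply, leftReg_apply, Equiv.Perm.inv_def]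

lemma mulEquiv_mem_Hol {N : Type*} [Group N] (f : N ≃* N) :
    (f.toEquiv : Equiv.Perm N) ∈ Hol N := by
  rw [Hol, Subgroup.mem_normalizer_iff]
  intro h
  constructor
  · rintro ⟨n, rfl⟩
    exact ⟨f n, (conj_leftReg f n).symm⟩
  · rintro ⟨n, hn⟩
    refine ⟨f.symm n, ?_⟩
    have key := conj_leftReg f.symm n
    have hsymm : (f.symm.toEquiv : Equiv.Perm N) = (f.toEquiv : Equiv.Perm N)⁻¹ := rfl
    rw [← key, hsymm, hn]
    group

variable (m n : ℕ)

def alphaE : DihedralGroup n ≃* DihedralGroup n where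
  toFun x := match x with | .r i => .r i | .sr i => .sr (i - 1)
  invFun x := match x with | .r i => .r i | .sr i => .sr (i + 1)
  left_inv := by rintro (i | i) <;> simp
  right_inv := by rintro (i | i) <;> simp
  map_mul' := by rintro (i | i) (j | j) <;> simp [r_mul_r, r_mul_sr, sr_mul_r, sr_mul_sr] <;> ring_nf

abbrev NN := Multiplicative (ZMod m) × DihedralGroup n

def FE : NN m n ≃* NN m n := MulEquiv.prodCongr (MulEquiv.refl _) (alphaE n)

noncomputable def Pi : Equiv.Perm (NN m n) :=
  leftReg (NN m n) (Multiplicative.ofAdd (1 : ZMod m), sr 0) * ((FE m n).toEquiv : Equiv.Perm (NN m n))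

lemma Pi_apply (c : Multiplicative (ZMod m)) (x : DihedralGroup n) :
    Pi m n (c, x) = (Multiplicative.ofAdd (1 : ZMod m) * c, sr 0 * alphaE n x) := rfl

lemma Pi_mem_Hol : Pi m n ∈ Hol (NN m n) :=
  mul_mem (leftReg_mem_Hol _) (mulEquiv_mem_Hol (FE m n))

end HolScratch

namespace HolScratch2
open HolScratch DihedralGroup

variable (m n : ℕ)

noncomputable abbrev P := Pi m n

def w : NN m n := (Multiplicative.ofAdd (2 : ZMod m), r (-1))

lemma Pi_sq (z : NN m n) : (P m n ^ 2) z = z * w m n := by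
  obtain ⟨c, x⟩ := z
  cases x <;>
    simp [pow_succ, Equiv.Perm.mul_apply, Pi_apply, alphaE, w, Prod.mul_def,
      r_mul_r, r_mul_sr, sr_mul_r, sr_mul_sr, sub_eq_add_neg, add_comm, add_left_comm] <;>
  · rw [show (Multiplicative.ofAdd (2 : ZMod m)) =
        Multiplicative.ofAdd (1 : ZMod m) * Multiplicative.ofAdd (1 : ZMod m) by
          rw [← ofAdd_add]; norm_num]
    rw [← mul_assoc, mul_comm]

lemma Pi_pow_two_mul (k : ℕ) (z : NN m n) : (P m n ^ (2 * k)) z = z * (w m n) ^ k := by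
  induction k generalizing z with
  | zero => simp
  | succ k ih =>
    have h2 : 2 * (k + 1) = 2 * k + 2 := by ring
    rw [h2, pow_add, Equiv.Perm.mul_apply, ih, Pi_sq, pow_succ', mul_assoc]

lemma w_pow (k : ℕ) : (w m n) ^ k = (Multiplicative.ofAdd ((2 * k : ℕ) : ZMod m), r (-(k : ZMod n))) := by
  induction k with
  | zero => simp [w, Prod.mul_def]; rfl
  | succ k ih =>
    rw [pow_succ, ih]
    simp [w, Prod.mul_def, r_mul_r]
    constructor
    · rw [← ofAdd_add]
      push_cast
      ring_nf
    · push_cast; ring_nf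

lemma one_def : (1 : NN m n) = (1, r 0) := rfl

lemma Pi_pow_even (t : ℕ) :
    (P m n ^ (2 * t)) 1 = (Multiplicative.ofAdd ((2 * t : ℕ) : ZMod m), r (-(t : ZMod n))) := by
  rw [Pi_pow_two_mul, w_pow, one_mul]

lemma Pi_pow_odd (t : ℕ) :
    (P m n ^ (2 * t + 1)) 1 = (Multiplicative.ofAdd ((2 * t + 1 : ℕ) : ZMod m), sr (-(t : ZMod n))) := by
  rw [pow_add, pow_one, Equiv.Perm.mul_apply]
  have h1 : P m n 1 = (Multiplicative.ofAdd (1 : ZMod m), sr 0) := by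
    rw [one_def]; simp [Pi_apply, alphaE, sr_mul_r, r_mul_r]; rfl
  rw [h1, Pi_pow_two_mul, w_pow]
  simp [Prod.mul_def, sr_mul_r, ← ofAdd_add]
  push_cast
  ring

end HolScratch2

namespace HolScratch3
open HolScratch HolScratch2 DihedralGroup

variable (m n : ℕ)

lemma mod_of_eq {k l : ℕ} (h : (P m n ^ k) 1 = (P m n ^ l) 1) :
    k ≡ l [MOD m] ∧ k ≡ l [MOD 2 * n] := by
  rcases Nat.even_or_odd k with ⟨t1, ht1⟩ | ⟨t1, ht1⟩ <;>
    rcases Nat.even_or_odd l with ⟨t2, ht2⟩ | ⟨t2, ht2⟩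
  · have hk : k = 2 * t1 := by omega
    have hl : l = 2 * t2 := by omega
    rw [hk, hl, Pi_pow_even, Pi_pow_even] at h
    simp only [Prod.mk.injEq, r.injEq, neg_inj, EmbeddingLike.apply_eq_iff_eq] at h
    refine ⟨by rw [hk, hl]; exact (ZMod.natCast_eq_natCast_iff _ _ _).1 h.1, ?_⟩
    have := Nat.ModEq.mul_left' 2 ((ZMod.natCast_eq_natCast_iff _ _ _).1 h.2)
    rwa [hk, hl]
  · have hk : k = 2 * t1 := by omega
    rw [hk, ht2, Pi_pow_even, Pi_pow_odd] at h
    simp at h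
  · have hl : l = 2 * t2 := by omega
    rw [ht1, hl, Pi_pow_odd, Pi_pow_even] at h
    simp at h
  · rw [ht1, ht2, Pi_pow_odd, Pi_pow_odd] at h
    simp only [Prod.mk.injEq, sr.injEq, neg_inj, EmbeddingLike.apply_eq_iff_eq] at h
    refine ⟨by rw [ht1, ht2]; exact (ZMod.natCast_eq_natCast_iff _ _ _).1 h.1, ?_⟩
    have := (Nat.ModEq.mul_left' 2 ((ZMod.natCast_eq_natCast_iff _ _ _).1 h.2)).add_right 1
    rwa [← ht1, ← ht2] at this

lemma Pi_pow_card : P m n ^ (m * (2 * n)) = 1 := by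
  have h : m * (2 * n) = 2 * (m * n) := by ring
  refine Equiv.ext fun z => ?_
  rw [h, Pi_pow_two_mul, w_pow]
  have h1 : ((2 * (m * n) : ℕ) : ZMod m) = 0 := by push_cast [ZMod.natCast_self]; ring
  have h2 : ((m * n : ℕ) : ZMod n) = 0 := by push_cast [ZMod.natCast_self]; ring
  rw [h1, h2]
  simp [Prod.mul_def, r_mul_r, ← DihedralGroup.one_def]

lemma card_NN [NeZero m] [NeZero n] : Fintype.card (NN m n) = m * (2 * n) := by
  rw [Fintype.card_prod, DihedralGroup.card]
  simp [ZMod.card]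

lemma orderOf_Pi [NeZero m] [NeZero n] (hco : Nat.Coprime m (2 * n)) :
    orderOf (P m n) = m * (2 * n) := by
  have hdvd : orderOf (P m n) ∣ m * (2 * n) := orderOf_dvd_of_pow_eq_one (Pi_pow_card m n)
  have h0 : (P m n ^ orderOf (P m n)) 1 = (P m n ^ 0) 1 := by
    rw [pow_orderOf_eq_one, pow_zero]
  obtain ⟨ha, hb⟩ := mod_of_eq m n h0
  exact Nat.dvd_antisymm hdvd
    (hco.mul_dvd_of_dvd_of_dvd (Nat.modEq_zero_iff_dvd.1 ha) (Nat.modEq_zero_iff_dvd.1 hb))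

lemma Pi_surj [NeZero m] [NeZero n] (hco : Nat.Coprime m (2 * n)) (y : NN m n) :
    ∃ k : ℕ, (P m n ^ k) 1 = y := by
  let f : Fin (m * (2 * n)) → NN m n := fun k => (P m n ^ (k : ℕ)) 1
  have hinj : Function.Injective f := by
    intro a b hab
    obtain ⟨h1, h2⟩ := mod_of_eq m n hab
    have hmod := (Nat.modEq_and_modEq_iff_modEq_mul hco).1 ⟨h1, h2⟩
    exact Fin.ext (by rwa [Nat.ModEq, Nat.mod_eq_of_lt a.2, Nat.mod_eq_of_lt b.2] at hmod)
  have hbij : Function.Bijective f :=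
    (Fintype.bijective_iff_injective_and_card f).2 ⟨hinj, by rw [Fintype.card_fin, card_NN]⟩
  obtain ⟨k, hk⟩ := hbij.2 y
  exact ⟨k, hk⟩

theorem key [NeZero m] [NeZero n] (hco : Nat.Coprime m (2 * n)) :
    ∃ M : Subgroup (Equiv.Perm (NN m n)),
      M ≤ Hol (NN m n) ∧ IsTransitiveSubgroup M ∧
      Nat.card M = Nat.card (NN m n) ∧
      Nonempty (M ≃* Multiplicative (ZMod (m * (2 * n)))) := by
  refine ⟨Subgroup.zpowers (P m n), ?_, ?_, ?_, ?_⟩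
  · rw [Subgroup.zpowers_le]
    exact Pi_mem_Hol m n
  · intro a b
    obtain ⟨j, hj⟩ := Pi_surj m n hco a
    obtain ⟨k, hk⟩ := Pi_surj m n hco b
    refine ⟨P m n ^ ((k : ℤ) - (j : ℤ)), ⟨_, rfl⟩, ?_⟩
    have hj' : (P m n ^ ((j : ℕ) : ℤ)) 1 = a := by rw [zpow_natCast]; exact hj
    have hk' : (P m n ^ ((k : ℕ) : ℤ)) 1 = b := by rw [zpow_natCast]; exact hk
    rw [zpow_sub, Equiv.Perm.mul_apply, ← hj', Equiv.Perm.inv_def, Equiv.symm_apply_apply, hk']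
  · rw [Nat.card_zpowers, orderOf_Pi m n hco, Nat.card_eq_fintype_card, card_NN]
  · have hcyc : IsCyclic (Subgroup.zpowers (P m n)) := by
      refine ⟨⟨⟨P m n, Subgroup.mem_zpowers _⟩, fun x => ?_⟩⟩
      obtain ⟨k, hk⟩ := Subgroup.mem_zpowers_iff.1 x.2
      exact Subgroup.mem_zpowers_iff.2 ⟨k, Subtype.ext (by simpa using hk)⟩
    have hcard' : Nat.card (Subgroup.zpowers (P m n)) = m * (2 * n) := by
      rw [Nat.card_zpowers, orderOf_Pi m n hco]
    exact ⟨(hcard' ▸ zmodCyclicMulEquiv hcyc).symm⟩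

end HolScratch3


theorem hol_mixed_types_have_regular_cyclic_subgroup (p q : ℕ)
    (hp : p.Prime) (hq : q.Prime) (hpodd : Odd p) (hqodd : Odd q) (hlt : q < p) :
    (∃ M : Subgroup (Equiv.Perm (Multiplicative (ZMod p) × DihedralGroup q)),
      M ≤ Hol (Multiplicative (ZMod p) × DihedralGroup q) ∧
      IsTransitiveSubgroup M ∧
      Nat.card M = Nat.card (Multiplicative (ZMod p) × DihedralGroup q) ∧
      Nonempty (M ≃* Multiplicative (ZMod (2 * p * q)))) ∧
    (∃ M : Subgroup (Equiv.Perm (Multiplicative (ZMod q) × DihedralGroup p)),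
      M ≤ Hol (Multiplicative (ZMod q) × DihedralGroup p) ∧
      IsTransitiveSubgroup M ∧
      Nat.card M = Nat.card (Multiplicative (ZMod q) × DihedralGroup p) ∧
      Nonempty (M ≃* Multiplicative (ZMod (2 * p * q)))) := by
  haveI : NeZero p := ⟨hp.pos.ne'⟩
  haveI : NeZero q := ⟨hq.pos.ne'⟩
  have hp2 : p ≠ 2 := by rintro rfl; rcases hpodd with ⟨k, hk⟩; omega
  have hq2 : q ≠ 2 := by rintro rfl; rcases hqodd with ⟨k, hk⟩; omega
  have hpq : p ≠ q := by omega
  have hco1 : Nat.Coprime p (2 * q) :=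
    Nat.Coprime.mul_right
      (hp.coprime_iff_not_dvd.2 fun h => hp2 ((Nat.prime_dvd_prime_iff_eq hp Nat.prime_two).1 h))
      (hp.coprime_iff_not_dvd.2 fun h => hpq ((Nat.prime_dvd_prime_iff_eq hp hq).1 h))
  have hco2 : Nat.Coprime q (2 * p) :=
    Nat.Coprime.mul_right
      (hq.coprime_iff_not_dvd.2 fun h => hq2 ((Nat.prime_dvd_prime_iff_eq hq Nat.prime_two).1 h))
      (hq.coprime_iff_not_dvd.2 fun h => hpq ((Nat.prime_dvd_prime_iff_eq hq hp).1 h).symm)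
  constructor
  · obtain ⟨M, h1, h2, h3, h4⟩ := HolScratch3.key p q hco1
    have e : p * (2 * q) = 2 * p * q := by ring
    rw [e] at h4
    exact ⟨M, h1, h2, h3, h4⟩
  · obtain ⟨M, h1, h2, h3, h4⟩ := HolScratch3.key q p hco2
    have e : q * (2 * p) = 2 * p * q := by ring
    rw [e] at h4
    exact ⟨M, h1, h2, h3, h4⟩
end
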